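/- arXiv:2007.07808 — 2 statements merged into one kernel-verified Lean document; each statement's English description precedes it below -/
import Mathlib

section
/- Let N₀ be the five-node network described below, equipped with the everlasting constant network inflow rate u_s(θ) = 2 for all θ ≥ 0 at node s and zero inflow at all other nodes. Then: (a) the inflow rate is at most the capacity of every s-t cut, i.e. for every X ⊆ V with s ∈ X and t ∉ X one has Σ_{e∈δ⁺(X)} ν_e ≥ 2; and yet (b) no instantaneous dynamic equilibrium (IDE) flow in this network ever reaches a periodic state: there are no time θ̃ ≥ 0 and period p > 0 such that q_e(θ + kp) = q_e(θ) for all edges e, all θ ≥ θ̃ and all k ∈ ℕ. In particular, no IDE flow in this network reaches a steady state (a time after which all queue lengths stay constant forever). -/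
open MeasureTheory Set

/-- A walk in a directed graph given by `tail`/`head` maps: `IsWalk tail head v w L`
means the list of edges `L` forms a walk from `v` to `w`. -/
def IsWalk {V E : Type} (tail head : E → V) : V → V → List E → Prop
  | v, w, [] => v = w
  | v, w, e :: L => tail e = v ∧ IsWalk tail head (head e) w L

/-- A right-constant step function with finitely many jump points. -/
def RightConstantStep (g : ℝ → ℝ) : Prop :=
  ∃ s : Finset ℝ, ∀ x y : ℝ, x ≤ y → (∀ p ∈ s, ¬ (x < p ∧ p ≤ y)) → g x = g y

/-- A single-sink network: a finite directed graph with positive rational capacities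
and travel times, a sink reachable from every node, and nonnegative rational-valued
right-constant step network inflow rates (zero at the sink and for negative times). -/
structure Network (V E : Type) [Fintype V] [DecidableEq V] [Fintype E] [DecidableEq E] where
  tail : E → V
  head : E → V
  cap : E → ℝ
  time : E → ℝ
  sink : V
  u : V → ℝ → ℝ
  cap_pos : ∀ e, 0 < cap e
  cap_rat : ∀ e, ∃ q : ℚ, cap e = (q : ℝ)
  time_pos : ∀ e, 0 < time e
  time_rat : ∀ e, ∃ q : ℚ, time e = (q : ℝ)
  reach : ∀ v, ∃ L : List E, IsWalk tail head v sink L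
  u_nonneg : ∀ v θ, 0 ≤ u v θ
  u_rat : ∀ v θ, ∃ q : ℚ, u v θ = (q : ℝ)
  u_sink : ∀ θ, u sink θ = 0
  u_neg : ∀ v θ, θ < 0 → u v θ = 0
  u_step : ∀ v, RightConstantStep (u v)

variable {V E : Type} [Fintype V] [DecidableEq V] [Fintype E] [DecidableEq E]

/-- The edges leaving a node `v`, i.e. `δ⁺(v)`. -/
def Network.outEdges (N : Network V E) (v : V) : Finset E :=
  Finset.univ.filter (fun e => N.tail e = v)

/-- The edges entering a node `v`, i.e. `δ⁻(v)`. -/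
def Network.inEdges (N : Network V E) (v : V) : Finset E :=
  Finset.univ.filter (fun e => N.head e = v)

/-- `τ_min`, the minimal travel time of an edge. -/
noncomputable def Network.tauMin (N : Network V E) : ℝ := sInf (Set.range N.time)

/-- `max_ζ u_v(ζ)`, the maximal network inflow rate at `v`. -/
noncomputable def Network.uMax (N : Network V E) (v : V) : ℝ := ⨆ θ : ℝ, N.u v θ

/-- The maximal out-degree `Δ` of the network. -/
def Network.maxOutDeg (N : Network V E) : ℕ :=
  Finset.univ.sup (fun v => (N.outEdges v).card)

/-- All network inflow rates have bounded support. -/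
def Network.BddInflow (N : Network V E) : Prop :=
  ∀ v, ∃ B : ℝ, ∀ θ, B ≤ θ → N.u v θ = 0

/-- The directed graph of the network is acyclic. -/
def Network.Acyclic (N : Network V E) : Prop :=
  ∀ (v : V) (L : List E), L ≠ [] → ¬ IsWalk N.tail N.head v v L

/-- A flow over time: locally integrable nonnegative edge in- and outflow rates. -/
structure FlowOverTime (N : Network V E) where
  fplus : E → ℝ → ℝ
  fminus : E → ℝ → ℝ
  fplus_nonneg : ∀ e θ, 0 ≤ fplus e θ
  fminus_nonneg : ∀ e θ, 0 ≤ fminus e θ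
  fplus_int : ∀ e θ, IntervalIntegrable (fplus e) volume 0 θ
  fminus_int : ∀ e θ, IntervalIntegrable (fminus e) volume 0 θ

/-- The queue length `q_e(θ) = F⁺_e(θ) − F⁻_e(θ + τ_e)`. -/
noncomputable def queueOf (N : Network V E) (fplus fminus : E → ℝ → ℝ) (e : E) (θ : ℝ) : ℝ :=
  (∫ ζ in (0:ℝ)..θ, fplus e ζ) - ∫ ζ in (0:ℝ)..(θ + N.time e), fminus e ζ

/-- The instantaneous travel time `c_e(θ) = τ_e + q_e(θ)/ν_e`. -/
noncomputable def ctimeOf (N : Network V E) (fplus fminus : E → ℝ → ℝ) (e : E) (θ : ℝ) : ℝ :=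
  N.time e + queueOf N fplus fminus e θ / N.cap e

/-- The node label `ℓ_v(θ)`: the shortest instantaneous travel time from `v` to the sink. -/
noncomputable def labelOf (N : Network V E) (fplus fminus : E → ℝ → ℝ) (v : V) (θ : ℝ) : ℝ :=
  sInf { r : ℝ | ∃ L : List E, IsWalk N.tail N.head v N.sink L ∧
                  r = (L.map (fun e => ctimeOf N fplus fminus e θ)).sum }

/-- Edge `e` is active at time `θ`: `ℓ_{tail e}(θ) = c_e(θ) + ℓ_{head e}(θ)`. -/
def ActiveOf (N : Network V E) (fplus fminus : E → ℝ → ℝ) (e : E) (θ : ℝ) : Prop :=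
  labelOf N fplus fminus (N.tail e) θ =
    ctimeOf N fplus fminus e θ + labelOf N fplus fminus (N.head e) θ

/-- Feasibility of a flow over time: flow conservation (i)/(ii), no outflow before `τ_e`
(iii), and queues operating at capacity (iv). -/
def Feasible (N : Network V E) (f : FlowOverTime N) : Prop :=
  (∀ v, v ≠ N.sink → ∀ θ : ℝ, 0 ≤ θ →
      (∑ e ∈ N.outEdges v, f.fplus e θ) - (∑ e ∈ N.inEdges v, f.fminus e θ) = N.u v θ) ∧
  (∀ θ : ℝ, 0 ≤ θ →
      (∑ e ∈ N.outEdges N.sink, f.fplus e θ) - (∑ e ∈ N.inEdges N.sink, f.fminus e θ) ≤ 0) ∧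
  (∀ e, ∀ θ : ℝ, 0 ≤ θ → θ < N.time e → f.fminus e θ = 0) ∧
  (∀ e, ∀ θ : ℝ, 0 ≤ θ →
      f.fminus e (θ + N.time e) =
        if 0 < queueOf N f.fplus f.fminus e θ then N.cap e
        else min (f.fplus e θ) (N.cap e))

/-- An instantaneous dynamic equilibrium: a feasible flow that only sends flow
into currently active edges. -/
def IsIDE (N : Network V E) (f : FlowOverTime N) : Prop :=
  Feasible N f ∧
  ∀ e, ∀ θ : ℝ, 0 ≤ θ → 0 < f.fplus e θ → ActiveOf N f.fplus f.fminus e θ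

/-- `g` is almost everywhere constant on the set `S`. -/
def AEConstOn (g : ℝ → ℝ) (S : Set ℝ) : Prop :=
  ∃ c : ℝ, ∀ᵐ θ ∂(volume.restrict S), g θ = c

/-- The `i`-th segment of the partition `0 = t 0 < t 1 < ⋯ < t n < ∞`. -/
def phaseSeg (n : ℕ) (t : ℕ → ℝ) (i : ℕ) : Set ℝ :=
  if i < n then Set.Ioo (t i) (t (i+1)) else Set.Ioi (t n)

/-- `ℝ≥0` splits (up to finitely many points) into the `n+1` intervals given by
`t`, on each of which all edge in- and outflow rates are a.e. constant; i.e. the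
flow has at most `n+1` phases. -/
def PhasePartition (N : Network V E) (f : FlowOverTime N) (n : ℕ) (t : ℕ → ℝ) : Prop :=
  t 0 = 0 ∧ (∀ i, i < n → t i < t (i+1)) ∧
  ∀ i, i ≤ n → ∀ e, AEConstOn (f.fplus e) (phaseSeg n t i) ∧ AEConstOn (f.fminus e) (phaseSeg n t i)

private lemma integral_le_const_of_Ioo {g : ℝ → ℝ} {x y c : ℝ} (hxy : x ≤ y)
    (hint : IntervalIntegrable g volume x y) (h : ∀ ζ ∈ Set.Ioo x y, g ζ ≤ c) :
    ∫ ζ in x..y, g ζ ≤ c * (y - x) := by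
  have hio : IntegrableOn g (Set.Ioo x y) volume := by
    have := intervalIntegrable_iff.mp hint
    rw [uIoc_of_le hxy] at this
    exact this.mono_set Set.Ioo_subset_Ioc_self
  rw [intervalIntegral.integral_of_le hxy, integral_Ioc_eq_integral_Ioo]
  have hc : ∫ ζ in Set.Ioo x y, (c : ℝ) = c * (y - x) := by
    rw [setIntegral_const, measureReal_def, Real.volume_Ioo, smul_eq_mul,
      ENNReal.toReal_ofReal (by linarith), mul_comm]
  rw [← hc]
  exact setIntegral_mono_on hio (integrableOn_const (by
    rw [Real.volume_Ioo]; exact ENNReal.ofReal_ne_top)) measurableSet_Ioo h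

private lemma integral_ge_const_of_Ioo {g : ℝ → ℝ} {x y c : ℝ} (hxy : x ≤ y)
    (hint : IntervalIntegrable g volume x y) (h : ∀ ζ ∈ Set.Ioo x y, c ≤ g ζ) :
    c * (y - x) ≤ ∫ ζ in x..y, g ζ := by
  have := integral_le_const_of_Ioo (g := fun ζ => -g ζ) (c := -c) hxy hint.neg
    (fun ζ hζ => by simpa using h ζ hζ)
  rw [intervalIntegral.integral_neg] at this
  linarith

private lemma integral_eq_const_of_Ioo {g : ℝ → ℝ} {x y c : ℝ} (hxy : x ≤ y)
    (hint : IntervalIntegrable g volume x y) (h : ∀ ζ ∈ Set.Ioo x y, g ζ = c) :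
    ∫ ζ in x..y, g ζ = c * (y - x) :=
  le_antisymm (integral_le_const_of_Ioo hxy hint (fun ζ hζ => (h ζ hζ).le))
    (integral_ge_const_of_Ioo hxy hint (fun ζ hζ => (h ζ hζ).ge))

private lemma phase2 (P r q : ℝ → ℝ) (a b : ℝ) (hab : a ≤ b)
    (hq : ∀ x y : ℝ, q y - q x = ∫ ζ in x..y, (P ζ - r ζ))
    (hint : ∀ x y : ℝ, IntervalIntegrable (fun ζ => P ζ - r ζ) volume x y)
    (hP : ∀ ζ ∈ Set.Ioo a b, P ζ = 2)
    (hr1 : ∀ ζ ∈ Set.Ioo a b, r ζ ≤ 1)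
    (hrq : ∀ ζ ∈ Set.Ioo a b, 0 < q ζ → r ζ = 1)
    (hqa : 0 ≤ q a) :
    ∀ x ∈ Set.Icc a b, q x = q a + (x - a) := by
  have hlow : ∀ x ∈ Set.Icc a b, q a + (x - a) ≤ q x := by
    rintro x ⟨hax, hxb⟩
    have := integral_ge_const_of_Ioo (c := 1) hax (hint a x) (fun ζ hζ => by
      have h1 := hP ζ ⟨hζ.1, lt_of_lt_of_le hζ.2 hxb⟩
      have h2 := hr1 ζ ⟨hζ.1, lt_of_lt_of_le hζ.2 hxb⟩
      linarith)
    have h3 := hq a x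
    linarith
  rintro x ⟨hax, hxb⟩
  have heq := integral_eq_const_of_Ioo (c := 1) hax (hint a x) (fun ζ hζ => by
    have hmem : ζ ∈ Set.Icc a b := ⟨hζ.1.le, hζ.2.le.trans hxb⟩
    have hpos : 0 < q ζ := lt_of_lt_of_le (by have := hζ.1; linarith) (hlow ζ hmem)
    have h1 := hP ζ ⟨hζ.1, lt_of_lt_of_le hζ.2 hxb⟩
    have h2 := hrq ζ ⟨hζ.1, lt_of_lt_of_le hζ.2 hxb⟩ hpos
    rw [h1, h2]; norm_num)
  have h3 := hq a x
  linarith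

private lemma phase0 (P r q : ℝ → ℝ) (a b : ℝ) (hab : a ≤ b)
    (hq : ∀ x y : ℝ, q y - q x = ∫ ζ in x..y, (P ζ - r ζ))
    (hint : ∀ x y : ℝ, IntervalIntegrable (fun ζ => P ζ - r ζ) volume x y)
    (hP : ∀ ζ ∈ Set.Ioo a b, P ζ = 0)
    (hr01 : ∀ ζ ∈ Set.Ioo a b, 0 ≤ r ζ ∧ r ζ ≤ 1)
    (hrq : ∀ ζ ∈ Set.Ioo a b, 0 < q ζ → r ζ = 1)
    (hq0 : ∀ ζ ∈ Set.Icc a b, 0 ≤ q ζ) :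
    ∀ x ∈ Set.Icc a b, q x = max (q a - (x - a)) 0 := by
  have hqa : 0 ≤ q a := hq0 a ⟨le_refl a, hab⟩
  have hmono : ∀ x y : ℝ, a ≤ x → x ≤ y → y ≤ b → q y ≤ q x := by
    intro x y hax hxy hyb
    have := integral_le_const_of_Ioo (c := 0) hxy (hint x y) (fun ζ hζ => by
      have hmem : ζ ∈ Set.Ioo a b := ⟨lt_of_le_of_lt hax hζ.1, lt_of_lt_of_le hζ.2 hyb⟩
      have h1 := hP ζ hmem
      have h2 := (hr01 ζ hmem).1
      linarith)
    have h3 := hq x y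
    linarith
  have hlin : ∀ x ∈ Set.Icc a b, x ≤ a + q a → q x = q a - (x - a) := by
    rintro x ⟨hax, hxb⟩ hxq
    have hge : q a - (x - a) ≤ q x := by
      have := integral_ge_const_of_Ioo (c := -1) hax (hint a x) (fun ζ hζ => by
        have hmem : ζ ∈ Set.Ioo a b := ⟨hζ.1, lt_of_lt_of_le hζ.2 hxb⟩
        have h1 := hP ζ hmem
        have h2 := (hr01 ζ hmem).2
        linarith)
      have h3 := hq a x
      linarith
    by_contra hne
    have hgt : q a - (x - a) < q x := lt_of_le_of_ne hge (fun h => hne h.symm)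
    by_cases hall : ∀ ζ ∈ Set.Ioo a x, 0 < q ζ
    · have heq := integral_eq_const_of_Ioo (c := -1) hax (hint a x) (fun ζ hζ => by
        have hmem : ζ ∈ Set.Ioo a b := ⟨hζ.1, lt_of_lt_of_le hζ.2 hxb⟩
        have h1 := hP ζ hmem
        have h2 := hrq ζ hmem (hall ζ hζ)
        rw [h1, h2]; norm_num)
      have h3 := hq a x
      nlinarith [heq, h3]
    · push_neg at hall
      obtain ⟨ζ, hζ, hζq⟩ := hall
      have hz : q ζ = 0 := le_antisymm hζq (hq0 ζ ⟨hζ.1.le, hζ.2.le.trans hxb⟩)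
      have := hmono ζ x hζ.1.le hζ.2.le hxb
      linarith
  rintro x ⟨hax, hxb⟩
  by_cases hx : x ≤ a + q a
  · rw [max_eq_left (by linarith)]
    exact hlin x ⟨hax, hxb⟩ hx
  · push_neg at hx
    have hmem : a + q a ∈ Set.Icc a b := ⟨by linarith, by linarith⟩
    have h0 : q (a + q a) = 0 := by
      have := hlin (a + q a) hmem (le_refl _); rw [this]; ring
    have h1 : q x ≤ 0 := by
      have := hmono (a + q a) x (by linarith) (by linarith) hxb
      linarith
    have h2 : 0 ≤ q x := hq0 x ⟨hax, hxb⟩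
    rw [max_eq_right (by linarith)]
    linarith

private lemma q_nonneg (P r q : ℝ → ℝ)
    (hq : ∀ x y : ℝ, q y - q x = ∫ ζ in x..y, (P ζ - r ζ))
    (hint : ∀ x y : ℝ, IntervalIntegrable (fun ζ => P ζ - r ζ) volume x y)
    (hcont : Continuous q) (hq0 : q 0 = 0)
    (hpr : ∀ ζ : ℝ, 0 ≤ ζ → q ζ < 0 → 0 ≤ P ζ - r ζ) :
    ∀ θ : ℝ, 0 ≤ θ → 0 ≤ q θ := by
  intro θ hθ
  by_contra hneg
  push_neg at hneg
  set S : Set ℝ := Set.Icc 0 θ ∩ q ⁻¹' Set.Ici 0 with hS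
  have hSc : IsCompact S := isCompact_Icc.inter_right (isClosed_Ici.preimage hcont)
  have hSne : S.Nonempty := ⟨0, ⟨le_refl 0, hθ⟩, by simp [hq0]⟩
  have hσ := hSc.sSup_mem hSne
  set σ := sSup S with hσdef
  obtain ⟨⟨hσ0, hσθ⟩, hσq⟩ := hσ
  have hlt : ∀ ζ ∈ Set.Ioo σ θ, q ζ < 0 := by
    intro ζ hζ
    by_contra hge
    push_neg at hge
    have : ζ ∈ S := ⟨⟨le_trans hσ0 hζ.1.le, hζ.2.le⟩, hge⟩
    have := le_csSup hSc.bddAbove this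
    linarith [hζ.1]
  have hσθ' : σ ≤ θ := hσθ
  have := integral_ge_const_of_Ioo (c := 0) hσθ' (hint σ θ) (fun ζ hζ =>
    hpr ζ (le_trans hσ0 hζ.1.le) (hlt ζ hζ))
  have h3 := hq σ θ
  have hgq2 : 0 ≤ q σ := hσq
  nlinarith [hgq2]


private lemma q_nonpos (P r q : ℝ → ℝ)
    (hq : ∀ x y : ℝ, q y - q x = ∫ ζ in x..y, (P ζ - r ζ))
    (hint : ∀ x y : ℝ, IntervalIntegrable (fun ζ => P ζ - r ζ) volume x y)
    (hcont : Continuous q) (hq0 : q 0 = 0)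
    (hpr : ∀ ζ : ℝ, 0 ≤ ζ → 0 < q ζ → P ζ - r ζ ≤ 0) :
    ∀ θ : ℝ, 0 ≤ θ → q θ ≤ 0 := by
  intro θ hθ
  by_contra hneg
  push_neg at hneg
  set S : Set ℝ := Set.Icc 0 θ ∩ q ⁻¹' Set.Iic 0 with hS
  have hSc : IsCompact S := isCompact_Icc.inter_right (isClosed_Iic.preimage hcont)
  have hSne : S.Nonempty := ⟨0, ⟨le_refl 0, hθ⟩, by simp [hq0]⟩
  have hσ := hSc.sSup_mem hSne
  set σ := sSup S with hσdef
  obtain ⟨⟨hσ0, hσθ⟩, hσq⟩ := hσ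
  have hlt : ∀ ζ ∈ Set.Ioo σ θ, 0 < q ζ := by
    intro ζ hζ
    by_contra hge
    push_neg at hge
    have : ζ ∈ S := ⟨⟨le_trans hσ0 hζ.1.le, hζ.2.le⟩, hge⟩
    have := le_csSup hSc.bddAbove this
    linarith [hζ.1]
  have := integral_le_const_of_Ioo (c := 0) hσθ (hint σ θ) (fun ζ hζ =>
    hpr ζ (le_trans hσ0 hζ.1.le) (hlt ζ hζ))
  have h3 := hq σ θ
  have hσq2 : q σ ≤ 0 := hσq
  nlinarith [hσq2]

private lemma cont_primitive {g : ℝ → ℝ} (h : ∀ θ : ℝ, IntervalIntegrable g volume 0 θ) :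
    Continuous (fun θ : ℝ => ∫ t in (0:ℝ)..θ, g t) :=
  intervalIntegral.continuous_primitive (fun a b => (h a).symm.trans (h b)) 0

private lemma walk4 (L : List (Fin 5)) :
    IsWalk (![0, 0, 1, 2, 3] : Fin 5 → Fin 5) (![1, 2, 4, 3, 4] : Fin 5 → Fin 5) 4 4 L ↔ L = [] := by
  cases L with
  | nil => simp [IsWalk]
  | cons e L =>
    simp only [IsWalk]
    constructor
    · rintro ⟨he, -⟩; exfalso; fin_cases e <;> simp_all
    · intro h; simp at h

private lemma walk3 (L : List (Fin 5)) :
    IsWalk (![0, 0, 1, 2, 3] : Fin 5 → Fin 5) (![1, 2, 4, 3, 4] : Fin 5 → Fin 5) 3 4 L ↔ L = [4] := by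
  cases L with
  | nil => simp [IsWalk]
  | cons e L =>
    simp only [IsWalk]
    constructor
    · rintro ⟨he, hw⟩
      have he4 : e = 4 := by fin_cases e <;> simp_all
      subst he4
      have hw : IsWalk (![0,0,1,2,3] : Fin 5 → Fin 5) ![1,2,4,3,4] 4 4 L := hw
      rw [walk4] at hw
      simp [hw]
    · intro h
      injection h with h1 h2
      subst h1; subst h2
      exact ⟨rfl, (walk4 []).mpr rfl⟩

private lemma walk1 (L : List (Fin 5)) :
    IsWalk (![0, 0, 1, 2, 3] : Fin 5 → Fin 5) (![1, 2, 4, 3, 4] : Fin 5 → Fin 5) 1 4 L ↔ L = [2] := by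
  cases L with
  | nil => simp [IsWalk]
  | cons e L =>
    simp only [IsWalk]
    constructor
    · rintro ⟨he, hw⟩
      have he2 : e = 2 := by fin_cases e <;> simp_all
      subst he2
      have hw : IsWalk (![0,0,1,2,3] : Fin 5 → Fin 5) ![1,2,4,3,4] 4 4 L := hw
      rw [walk4] at hw
      simp [hw]
    · intro h
      injection h with h1 h2
      subst h1; subst h2
      exact ⟨rfl, (walk4 []).mpr rfl⟩

private lemma walk2 (L : List (Fin 5)) :
    IsWalk (![0, 0, 1, 2, 3] : Fin 5 → Fin 5) (![1, 2, 4, 3, 4] : Fin 5 → Fin 5) 2 4 L ↔ L = [3, 4] := by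
  cases L with
  | nil => simp [IsWalk]
  | cons e L =>
    simp only [IsWalk]
    constructor
    · rintro ⟨he, hw⟩
      have he3 : e = 3 := by fin_cases e <;> simp_all
      subst he3
      have hw : IsWalk (![0,0,1,2,3] : Fin 5 → Fin 5) ![1,2,4,3,4] 3 4 L := hw
      rw [walk3] at hw
      simp [hw]
    · intro h
      injection h with h1 h2
      subst h1; subst h2
      exact ⟨rfl, (walk3 [4]).mpr rfl⟩

private lemma walk0 (L : List (Fin 5)) :
    IsWalk (![0, 0, 1, 2, 3] : Fin 5 → Fin 5) (![1, 2, 4, 3, 4] : Fin 5 → Fin 5) 0 4 L ↔ L = [0, 2] ∨ L = [1, 3, 4] := by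
  cases L with
  | nil => simp [IsWalk]
  | cons e L =>
    simp only [IsWalk]
    constructor
    · rintro ⟨he, hw⟩
      have he01 : e = 0 ∨ e = 1 := by fin_cases e <;> simp_all
      rcases he01 with h | h
      · subst h
        have hw : IsWalk (![0,0,1,2,3] : Fin 5 → Fin 5) ![1,2,4,3,4] 1 4 L := hw
        rw [walk1] at hw
        simp [hw]
      · subst h
        have hw : IsWalk (![0,0,1,2,3] : Fin 5 → Fin 5) ![1,2,4,3,4] 2 4 L := hw
        rw [walk2] at hw
        simp [hw]
    · rintro (h | h) <;> (injection h with h1 h2; subst h1; subst h2)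
      · exact ⟨rfl, (walk1 [2]).mpr rfl⟩
      · exact ⟨rfl, (walk2 [3, 4]).mpr rfl⟩

section labels
variable (N : Network (Fin 5) (Fin 5)) (P M : Fin 5 → ℝ → ℝ) (θ : ℝ)
variable (htail : N.tail = ![0, 0, 1, 2, 3]) (hhead : N.head = ![1, 2, 4, 3, 4]) (hsink : N.sink = 4)
include htail hhead hsink

private lemma label1 : labelOf N P M 1 θ = ctimeOf N P M 2 θ := by
  unfold labelOf
  rw [hsink, htail, hhead]
  have hset : {r : ℝ | ∃ L, IsWalk (![0,0,1,2,3] : Fin 5 → Fin 5) (![1,2,4,3,4] : Fin 5 → Fin 5) 1 4 L ∧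
      r = (L.map (fun e => ctimeOf N P M e θ)).sum} = {ctimeOf N P M 2 θ} := by
    ext r
    simp only [Set.mem_setOf_eq, Set.mem_singleton_iff]
    constructor
    · rintro ⟨L, hL, rfl⟩; rw [walk1] at hL; subst hL; simp
    · rintro rfl; exact ⟨[2], (walk1 [2]).mpr rfl, by simp⟩
  rw [hset, csInf_singleton]

private lemma label2 : labelOf N P M 2 θ = ctimeOf N P M 3 θ + ctimeOf N P M 4 θ := by
  unfold labelOf
  rw [hsink, htail, hhead]
  have hset : {r : ℝ | ∃ L, IsWalk (![0,0,1,2,3] : Fin 5 → Fin 5) (![1,2,4,3,4] : Fin 5 → Fin 5) 2 4 L ∧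
      r = (L.map (fun e => ctimeOf N P M e θ)).sum} = {ctimeOf N P M 3 θ + ctimeOf N P M 4 θ} := by
    ext r
    simp only [Set.mem_setOf_eq, Set.mem_singleton_iff]
    constructor
    · rintro ⟨L, hL, rfl⟩; rw [walk2] at hL; subst hL; simp
    · rintro rfl; exact ⟨[3, 4], (walk2 [3, 4]).mpr rfl, by simp⟩
  rw [hset, csInf_singleton]

private lemma label0 : labelOf N P M 0 θ =
    min (ctimeOf N P M 0 θ + ctimeOf N P M 2 θ)
        (ctimeOf N P M 1 θ + (ctimeOf N P M 3 θ + ctimeOf N P M 4 θ)) := by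
  unfold labelOf
  rw [hsink, htail, hhead]
  have hset : {r : ℝ | ∃ L, IsWalk (![0,0,1,2,3] : Fin 5 → Fin 5) (![1,2,4,3,4] : Fin 5 → Fin 5) 0 4 L ∧
      r = (L.map (fun e => ctimeOf N P M e θ)).sum} =
      {ctimeOf N P M 0 θ + ctimeOf N P M 2 θ,
       ctimeOf N P M 1 θ + (ctimeOf N P M 3 θ + ctimeOf N P M 4 θ)} := by
    ext r
    simp only [Set.mem_setOf_eq, Set.mem_insert_iff, Set.mem_singleton_iff]
    constructor
    · rintro ⟨L, hL, rfl⟩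
      rw [walk0] at hL
      rcases hL with h | h <;> subst h
      · left; simp
      · right; simp
    · rintro (rfl | rfl)
      · exact ⟨[0, 2], (walk0 [0, 2]).mpr (Or.inl rfl), by simp⟩
      · exact ⟨[1, 3, 4], (walk0 [1, 3, 4]).mpr (Or.inr rfl), by simp⟩
  rw [hset, csInf_pair]

end labels

set_option maxHeartbeats 2000000 in
/-- In the five-node network `N₀` (nodes `s=0, v=1, w=2, x=3, t=4`,
edges `sv=0, sw=1, vt=2, wx=3, xt=4`, all travel times `1`, capacities `2,2,1,1,1`,
sink `t`) with everlasting constant inflow rate `2` at `s`: (a) the inflow rate is at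
most the capacity of every `s`-`t` cut; and yet (b) no IDE flow ever reaches a periodic
state, and in particular no IDE flow reaches a steady state. -/
theorem ide_no_periodic_state
    (N : Network (Fin 5) (Fin 5))
    (htail : N.tail = ![0, 0, 1, 2, 3])
    (hhead : N.head = ![1, 2, 4, 3, 4])
    (hcap : N.cap = ![2, 2, 1, 1, 1])
    (htime : ∀ e, N.time e = 1)
    (hsink : N.sink = 4)
    (hu : ∀ w θ, N.u w θ = if w = 0 ∧ 0 ≤ θ then 2 else 0) :
    (∀ X : Finset (Fin 5), (0 : Fin 5) ∈ X → (4 : Fin 5) ∉ X →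
      2 ≤ ∑ e ∈ Finset.univ.filter (fun e => N.tail e ∈ X ∧ N.head e ∉ X), N.cap e) ∧
    ∀ f : FlowOverTime N, IsIDE N f →
      (¬ ∃ θt : ℝ, 0 ≤ θt ∧ ∃ p : ℝ, 0 < p ∧
        ∀ e, ∀ θ : ℝ, θt ≤ θ → ∀ k : ℕ,
          queueOf N f.fplus f.fminus e (θ + k * p) = queueOf N f.fplus f.fminus e θ) ∧
      (¬ ∃ θt : ℝ, 0 ≤ θt ∧
        ∀ e, ∀ θ : ℝ, θt ≤ θ →
          queueOf N f.fplus f.fminus e θ = queueOf N f.fplus f.fminus e θt) := by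
  constructor
  · -- part (a)
    intro X h0 h4
    rw [Finset.sum_filter, Fin.sum_univ_five]
    by_cases h1 : (1 : Fin 5) ∈ X <;> by_cases h2 : (2 : Fin 5) ∈ X <;>
      by_cases h3 : (3 : Fin 5) ∈ X <;>
      simp [htail, hhead, hcap, h0, h1, h2, h3, h4] <;> norm_num
  · -- part (b)
    intro f hf
    obtain ⟨⟨hcons, hsinkcons, hiii, hivraw⟩, hIDE⟩ := hf
    -- basic plumbing
    have hqdef : ∀ (e : Fin 5) (θ : ℝ), queueOf N f.fplus f.fminus e θ =
        (∫ ζ in (0:ℝ)..θ, f.fplus e ζ) - ∫ ζ in (0:ℝ)..(θ + 1), f.fminus e ζ := by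
      intro e θ; simp [queueOf, htime]
    have hPint : ∀ (e : Fin 5) (x y : ℝ), IntervalIntegrable (f.fplus e) volume x y :=
      fun e x y => (f.fplus_int e x).symm.trans (f.fplus_int e y)
    have hMint : ∀ (e : Fin 5) (x y : ℝ), IntervalIntegrable (f.fminus e) volume x y :=
      fun e x y => (f.fminus_int e x).symm.trans (f.fminus_int e y)
    have hMshift : ∀ (e : Fin 5) (x y : ℝ),
        IntervalIntegrable (fun ζ => f.fminus e (ζ + 1)) volume x y := by
      intro e x y
      have := (hMint e (x+1) (y+1)).comp_add_right 1
      simpa using this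
    have hPMint : ∀ (e : Fin 5) (x y : ℝ),
        IntervalIntegrable (fun ζ => f.fplus e ζ - f.fminus e (ζ + 1)) volume x y :=
      fun e x y => (hPint e x y).sub (hMshift e x y)
    have hqid : ∀ (e : Fin 5) (x y : ℝ),
        queueOf N f.fplus f.fminus e y - queueOf N f.fplus f.fminus e x =
        ∫ ζ in x..y, (f.fplus e ζ - f.fminus e (ζ + 1)) := by
      intro e x y
      rw [hqdef, hqdef,
        intervalIntegral.integral_sub (hPint e x y) (hMshift e x y),
        intervalIntegral.integral_comp_add_right (f.fminus e) 1,
        ← intervalIntegral.integral_interval_sub_left (f.fplus_int e y) (f.fplus_int e x),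
        ← intervalIntegral.integral_interval_sub_left (f.fminus_int e (y+1)) (f.fminus_int e (x+1))]
      ring
    have hqcont : ∀ e : Fin 5, Continuous (queueOf N f.fplus f.fminus e) := by
      intro e
      have h1 := cont_primitive (f.fplus_int e)
      have h2 := cont_primitive (f.fminus_int e)
      have heq : queueOf N f.fplus f.fminus e = fun θ =>
          (∫ ζ in (0:ℝ)..θ, f.fplus e ζ) - ∫ ζ in (0:ℝ)..(θ + 1), f.fminus e ζ :=
        funext fun θ => hqdef e θ
      rw [heq]
      exact h1.sub (h2.comp (continuous_id.add continuous_const))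
    have hq_at0 : ∀ e : Fin 5, queueOf N f.fplus f.fminus e 0 = 0 := by
      intro e
      rw [hqdef]
      have h0 : ∫ ζ in (0:ℝ)..(0 + 1 : ℝ), f.fminus e ζ = 0 * ((0 + 1 : ℝ) - 0) :=
        integral_eq_const_of_Ioo (by norm_num) (hMint e 0 (0+1))
          (fun ζ hζ => hiii e ζ hζ.1.le (by rw [htime]; linarith [hζ.2]))
      simp only [intervalIntegral.integral_same]
      rw [h0]; ring
    have hiv : ∀ (e : Fin 5) (θ : ℝ), 0 ≤ θ → f.fminus e (θ + 1) =
        if 0 < queueOf N f.fplus f.fminus e θ then N.cap e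
        else min (f.fplus e θ) (N.cap e) := by
      intro e θ hθ
      have := hivraw e θ hθ
      rwa [htime] at this
    -- conservation
    have hcons0 : ∀ θ : ℝ, 0 ≤ θ → f.fplus 0 θ + f.fplus 1 θ = 2 := by
      intro θ hθ
      have h := hcons 0 (by rw [hsink]; decide) θ hθ
      rw [hu] at h
      simp only [Network.outEdges, Network.inEdges, Finset.sum_filter,
        Fin.sum_univ_five, htail, hhead] at h
      simp [hθ] at h
      linarith
    have hcons1 : ∀ θ : ℝ, 0 ≤ θ → f.fplus 2 θ = f.fminus 0 θ := by
      intro θ hθ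
      have h := hcons 1 (by rw [hsink]; decide) θ hθ
      rw [hu] at h
      simp only [Network.outEdges, Network.inEdges, Finset.sum_filter,
        Fin.sum_univ_five, htail, hhead] at h
      simp [hθ] at h
      linarith
    have hcons2 : ∀ θ : ℝ, 0 ≤ θ → f.fplus 3 θ = f.fminus 1 θ := by
      intro θ hθ
      have h := hcons 2 (by rw [hsink]; decide) θ hθ
      rw [hu] at h
      simp only [Network.outEdges, Network.inEdges, Finset.sum_filter,
        Fin.sum_univ_five, htail, hhead] at h
      simp [hθ] at h
      linarith
    have hcons3 : ∀ θ : ℝ, 0 ≤ θ → f.fplus 4 θ = f.fminus 3 θ := by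
      intro θ hθ
      have h := hcons 3 (by rw [hsink]; decide) θ hθ
      rw [hu] at h
      simp only [Network.outEdges, Network.inEdges, Finset.sum_filter,
        Fin.sum_univ_five, htail, hhead] at h
      simp [hθ] at h
      linarith
    -- shorthand
    set q : Fin 5 → ℝ → ℝ := queueOf N f.fplus f.fminus with hqfun
    -- bounds on source outflows
    have hP0le : ∀ θ : ℝ, 0 ≤ θ → f.fplus 0 θ ≤ 2 := fun θ hθ => by
      have := hcons0 θ hθ; have := f.fplus_nonneg 1 θ; linarith
    have hP1le : ∀ θ : ℝ, 0 ≤ θ → f.fplus 1 θ ≤ 2 := fun θ hθ => by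
      have := hcons0 θ hθ; have := f.fplus_nonneg 0 θ; linarith
    -- all queues are nonnegative
    have hqnn : ∀ (e : Fin 5) (θ : ℝ), 0 ≤ θ → 0 ≤ q e θ := by
      intro e
      refine q_nonneg (f.fplus e) (fun ζ => f.fminus e (ζ + 1)) (q e) (hqid e) (hPMint e)
        (hqcont e) (hq_at0 e) ?_
      intro ζ hζ hneg
      have h := hiv e ζ hζ
      rw [if_neg (by linarith)] at h
      have : f.fminus e (ζ + 1) ≤ f.fplus e ζ := le_of_eq_of_le h (min_le_left _ _)
      linarith
    -- queues on sv, sw, xt are identically zero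
    have hM3le : ∀ ζ : ℝ, 0 ≤ ζ → f.fminus 3 ζ ≤ 1 := by
      intro ζ hζ
      rcases lt_or_ge ζ 1 with h | h
      · rw [hiii 3 ζ hζ (by rw [htime]; exact h)]; norm_num
      · have h3 := hiv 3 (ζ - 1) (by linarith)
        rw [show ζ - 1 + 1 = ζ by ring] at h3
        have hcap3 : N.cap 3 = 1 := by rw [hcap]; simp
        rw [h3]
        split
        · rw [hcap3]
        · rw [hcap3]; exact min_le_right _ _
    have hq0z : ∀ θ : ℝ, 0 ≤ θ → q 0 θ = 0 := by
      intro θ hθ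
      refine le_antisymm ?_ (hqnn 0 θ hθ)
      refine q_nonpos (f.fplus 0) (fun ζ => f.fminus 0 (ζ + 1)) (q 0) (hqid 0) (hPMint 0)
        (hqcont 0) (hq_at0 0) ?_ θ hθ
      intro ζ hζ hpos
      have h := hiv 0 ζ hζ
      rw [if_pos hpos] at h
      show f.fplus 0 ζ - f.fminus 0 (ζ + 1) ≤ 0
      have hc : N.cap 0 = 2 := by rw [hcap]; norm_num
      rw [h, hc]
      have := hP0le ζ hζ
      linarith
    have hq1z : ∀ θ : ℝ, 0 ≤ θ → q 1 θ = 0 := by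
      intro θ hθ
      refine le_antisymm ?_ (hqnn 1 θ hθ)
      refine q_nonpos (f.fplus 1) (fun ζ => f.fminus 1 (ζ + 1)) (q 1) (hqid 1) (hPMint 1)
        (hqcont 1) (hq_at0 1) ?_ θ hθ
      intro ζ hζ hpos
      have h := hiv 1 ζ hζ
      rw [if_pos hpos] at h
      show f.fplus 1 ζ - f.fminus 1 (ζ + 1) ≤ 0
      have hc : N.cap 1 = 2 := by rw [hcap]; norm_num
      rw [h, hc]
      have := hP1le ζ hζ
      linarith
    have hq4z : ∀ θ : ℝ, 0 ≤ θ → q 4 θ = 0 := by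
      intro θ hθ
      refine le_antisymm ?_ (hqnn 4 θ hθ)
      refine q_nonpos (f.fplus 4) (fun ζ => f.fminus 4 (ζ + 1)) (q 4) (hqid 4) (hPMint 4)
        (hqcont 4) (hq_at0 4) ?_ θ hθ
      intro ζ hζ hpos
      have h := hiv 4 ζ hζ
      rw [if_pos hpos] at h
      show f.fplus 4 ζ - f.fminus 4 (ζ + 1) ≤ 0
      have hc : N.cap 4 = 1 := by rw [hcap]; simp
      rw [h, hc]
      have h1 := hcons3 ζ hζ
      have h2 := hM3le ζ hζ
      linarith
    -- transfer of the source control to edges vt and wx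
    have hTR : ∀ ζ : ℝ, 1 ≤ ζ →
        f.fplus 2 ζ = f.fplus 0 (ζ - 1) ∧ f.fplus 3 ζ = 2 - f.fplus 0 (ζ - 1) := by
      intro ζ hζ
      have hζ0 : (0:ℝ) ≤ ζ := by linarith
      have hζ1 : (0:ℝ) ≤ ζ - 1 := by linarith
      have h0 := hiv 0 (ζ - 1) hζ1
      rw [show ζ - 1 + 1 = ζ by ring, if_neg (by rw [hq0z (ζ-1) hζ1]; norm_num)] at h0
      have h1 := hiv 1 (ζ - 1) hζ1
      rw [show ζ - 1 + 1 = ζ by ring, if_neg (by rw [hq1z (ζ-1) hζ1]; norm_num)] at h1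
      have hc0 : N.cap 0 = 2 := by rw [hcap]; norm_num
      have hc1 : N.cap 1 = 2 := by rw [hcap]; norm_num
      have hm0 : f.fminus 0 ζ = f.fplus 0 (ζ - 1) := by
        rw [h0, hc0, min_eq_left (hP0le (ζ-1) hζ1)]
      have hm1 : f.fminus 1 ζ = f.fplus 1 (ζ - 1) := by
        rw [h1, hc1, min_eq_left (hP1le (ζ-1) hζ1)]
      have hs := hcons0 (ζ - 1) hζ1
      constructor
      · rw [hcons1 ζ hζ0, hm0]
      · rw [hcons2 ζ hζ0, hm1]; linarith
    -- label values and forcing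
    have hct : ∀ θ : ℝ, 0 ≤ θ →
        ctimeOf N f.fplus f.fminus 0 θ = 1 ∧ ctimeOf N f.fplus f.fminus 1 θ = 1 ∧
        ctimeOf N f.fplus f.fminus 4 θ = 1 ∧
        ctimeOf N f.fplus f.fminus 2 θ = 1 + q 2 θ ∧
        ctimeOf N f.fplus f.fminus 3 θ = 1 + q 3 θ := by
      intro θ hθ
      unfold ctimeOf
      rw [htime, htime, htime, htime, htime, ← hqfun]
      have c0 : N.cap 0 = 2 := by rw [hcap]; norm_num
      have c1 : N.cap 1 = 2 := by rw [hcap]; norm_num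
      have c2 : N.cap 2 = 1 := by rw [hcap]; simp
      have c3 : N.cap 3 = 1 := by rw [hcap]; simp
      have c4 : N.cap 4 = 1 := by rw [hcap]; simp
      rw [c0, c1, c2, c3, c4, hq0z θ hθ, hq1z θ hθ, hq4z θ hθ]
      norm_num
    have hF0 : ∀ θ : ℝ, 0 ≤ θ → 1 + q 3 θ < q 2 θ →
        f.fplus 0 θ = 0 ∧ f.fplus 1 θ = 2 := by
      intro θ hθ hlt
      have hP0 : f.fplus 0 θ = 0 := by
        by_contra hne
        have hpos : 0 < f.fplus 0 θ := lt_of_le_of_ne (f.fplus_nonneg 0 θ) (Ne.symm hne)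
        have hact := hIDE 0 θ hθ hpos
        unfold ActiveOf at hact
        rw [htail, hhead] at hact
        have hact' : labelOf N f.fplus f.fminus 0 θ =
            ctimeOf N f.fplus f.fminus 0 θ + labelOf N f.fplus f.fminus 1 θ := hact
        rw [label0 N f.fplus f.fminus θ htail hhead hsink,
          label1 N f.fplus f.fminus θ htail hhead hsink] at hact'
        obtain ⟨c0, c1, c4, c2, c3⟩ := hct θ hθ
        rw [c0, c1, c2, c3, c4] at hact'
        rw [min_eq_right (by linarith)] at hact'
        linarith
      exact ⟨hP0, by have := hcons0 θ hθ; linarith⟩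
    have hF2 : ∀ θ : ℝ, 0 ≤ θ → q 2 θ < 1 + q 3 θ → f.fplus 0 θ = 2 := by
      intro θ hθ hlt
      have hP1 : f.fplus 1 θ = 0 := by
        by_contra hne
        have hpos : 0 < f.fplus 1 θ := lt_of_le_of_ne (f.fplus_nonneg 1 θ) (Ne.symm hne)
        have hact := hIDE 1 θ hθ hpos
        unfold ActiveOf at hact
        rw [htail, hhead] at hact
        have hact' : labelOf N f.fplus f.fminus 0 θ =
            ctimeOf N f.fplus f.fminus 1 θ + labelOf N f.fplus f.fminus 2 θ := hact
        rw [label0 N f.fplus f.fminus θ htail hhead hsink,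
          label2 N f.fplus f.fminus θ htail hhead hsink] at hact'
        obtain ⟨c0, c1, c4, c2, c3⟩ := hct θ hθ
        rw [c0, c1, c2, c3, c4] at hact'
        rw [min_eq_left (by linarith)] at hact'
        linarith
      have := hcons0 θ hθ; linarith
    -- phase lemma wrappers for the two unit-capacity queues vt (=2) and wx (=3)
    have hrfacts : ∀ e : Fin 5, N.cap e = 1 → ∀ ζ : ℝ, 0 ≤ ζ →
        (f.fminus e (ζ + 1) ≤ 1 ∧ (0 < q e ζ → f.fminus e (ζ + 1) = 1)) := by
      intro e hce ζ hζ
      have h := hiv e ζ hζ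
      rw [hce] at h
      constructor
      · rw [h]; split
        · exact le_refl 1
        · exact min_le_right _ _
      · intro hpos; rw [h, if_pos hpos]
    have PH2 : ∀ (e : Fin 5), N.cap e = 1 → ∀ a b : ℝ, 0 ≤ a → a ≤ b →
        (∀ ζ ∈ Set.Ioo a b, f.fplus e ζ = 2) →
        ∀ x ∈ Set.Icc a b, q e x = q e a + (x - a) := by
      intro e hce a b h0a hab hP
      refine phase2 (f.fplus e) (fun ζ => f.fminus e (ζ + 1)) (q e) a b hab (hqid e)
        (hPMint e) hP ?_ ?_ (hqnn e a h0a)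
      · intro ζ hζ; exact (hrfacts e hce ζ (by linarith [hζ.1])).1
      · intro ζ hζ hpos; exact (hrfacts e hce ζ (by linarith [hζ.1])).2 hpos
    have PH0 : ∀ (e : Fin 5), N.cap e = 1 → ∀ a b : ℝ, 0 ≤ a → a ≤ b →
        (∀ ζ ∈ Set.Ioo a b, f.fplus e ζ = 0) →
        ∀ x ∈ Set.Icc a b, q e x = max (q e a - (x - a)) 0 := by
      intro e hce a b h0a hab hP
      refine phase0 (f.fplus e) (fun ζ => f.fminus e (ζ + 1)) (q e) a b hab (hqid e)
        (hPMint e) hP ?_ ?_ ?_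
      · intro ζ hζ
        exact ⟨f.fminus_nonneg e (ζ + 1), (hrfacts e hce ζ (by linarith [hζ.1])).1⟩
      · intro ζ hζ hpos; exact (hrfacts e hce ζ (by linarith [hζ.1])).2 hpos
      · intro ζ hζ; exact hqnn e ζ (by linarith [hζ.1])
    have hc2 : N.cap 2 = 1 := by rw [hcap]; simp
    have hc3 : N.cap 3 = 1 := by rw [hcap]; simp
    -- initial segment [0,1]
    have hP2_01 : ∀ ζ ∈ Set.Ioo (0:ℝ) 1, f.fplus 2 ζ = 0 := by
      intro ζ hζ
      rw [hcons1 ζ hζ.1.le, hiii 0 ζ hζ.1.le (by rw [htime]; exact hζ.2)]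
    have hP3_01 : ∀ ζ ∈ Set.Ioo (0:ℝ) 1, f.fplus 3 ζ = 0 := by
      intro ζ hζ
      rw [hcons2 ζ hζ.1.le, hiii 1 ζ hζ.1.le (by rw [htime]; exact hζ.2)]
    have hA01 : ∀ x ∈ Set.Icc (0:ℝ) 1, q 2 x = 0 := by
      intro x hx
      have h := PH0 2 hc2 0 1 le_rfl (by norm_num) hP2_01 x hx
      rw [hq_at0 2] at h
      rw [h]
      exact max_eq_right (by linarith [hx.1])
    have hB01 : ∀ x ∈ Set.Icc (0:ℝ) 1, q 3 x = 0 := by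
      intro x hx
      have h := PH0 3 hc3 0 1 le_rfl (by norm_num) hP3_01 x hx
      rw [hq_at0 3] at h
      rw [h]
      exact max_eq_right (by linarith [hx.1])
    have hforce01 : ∀ ζ ∈ Set.Ioo (0:ℝ) 1, f.fplus 0 ζ = 2 := by
      intro ζ hζ
      apply hF2 ζ hζ.1.le
      rw [hA01 ζ ⟨hζ.1.le, hζ.2.le⟩, hB01 ζ ⟨hζ.1.le, hζ.2.le⟩]
      norm_num
    -- initial segment [1,2]
    have hP2_12 : ∀ ζ ∈ Set.Ioo (1:ℝ) 2, f.fplus 2 ζ = 2 := by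
      intro ζ hζ
      rw [(hTR ζ hζ.1.le).1, hforce01 (ζ - 1) ⟨by linarith [hζ.1], by linarith [hζ.2]⟩]
    have hP3_12 : ∀ ζ ∈ Set.Ioo (1:ℝ) 2, f.fplus 3 ζ = 0 := by
      intro ζ hζ
      rw [(hTR ζ hζ.1.le).2, hforce01 (ζ - 1) ⟨by linarith [hζ.1], by linarith [hζ.2]⟩]
      norm_num
    have hA12 : ∀ x ∈ Set.Icc (1:ℝ) 2, q 2 x = x - 1 := by
      intro x hx
      have h := PH2 2 hc2 1 2 (by norm_num) (by norm_num) hP2_12 x hx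
      rw [hA01 1 (by norm_num)] at h
      rw [h]; ring
    have hB12 : ∀ x ∈ Set.Icc (1:ℝ) 2, q 3 x = 0 := by
      intro x hx
      have h := PH0 3 hc3 1 2 (by norm_num) (by norm_num) hP3_12 x hx
      rw [hB01 1 (by norm_num)] at h
      rw [h]
      exact max_eq_right (by linarith [hx.1])
    have hforce12 : ∀ ζ ∈ Set.Ioo (1:ℝ) 2, f.fplus 0 ζ = 2 := by
      intro ζ hζ
      apply hF2 ζ (by linarith [hζ.1])
      rw [hA12 ζ ⟨hζ.1.le, hζ.2.le⟩, hB12 ζ ⟨hζ.1.le, hζ.2.le⟩]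
      linarith [hζ.2]
    -- the cycle lemma
    have hcycle : ∀ d T : ℝ, 0 ≤ d → d < 1 → 2 ≤ T →
        q 2 T = 1 + d → q 3 T = d → (∀ ζ ∈ Set.Ioo (T - 1) T, f.fplus 0 ζ = 2) →
        q 2 (T + (3 + d)/2 + 2) = 1 + (1 + d)/2 ∧
        q 3 (T + (3 + d)/2 + 2) = (1 + d)/2 ∧
        (∀ ζ ∈ Set.Ioo (T + (3 + d)/2 + 2 - 1) (T + (3 + d)/2 + 2), f.fplus 0 ζ = 2) ∧
        q 2 (T + 1) = 2 + d ∧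
        (∀ x ∈ Set.Icc T (T + (3 + d)/2 + 2), q 2 x ≤ 2 + d) := by
      intro d T hd0 hd1 hT2 hAT hBT hgp
      -- segment 1 : [T, T+1]
      have hP2_1 : ∀ ζ ∈ Set.Ioo T (T+1), f.fplus 2 ζ = 2 := by
        intro ζ hζ
        rw [(hTR ζ (by linarith [hζ.1])).1,
          hgp (ζ - 1) ⟨by linarith [hζ.1], by linarith [hζ.2]⟩]
      have hP3_1 : ∀ ζ ∈ Set.Ioo T (T+1), f.fplus 3 ζ = 0 := by
        intro ζ hζ
        rw [(hTR ζ (by linarith [hζ.1])).2,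
          hgp (ζ - 1) ⟨by linarith [hζ.1], by linarith [hζ.2]⟩]
        norm_num
      have hA1 : ∀ x ∈ Set.Icc T (T+1), q 2 x = 1 + d + (x - T) := by
        intro x hx
        have h := PH2 2 hc2 T (T+1) (by linarith) (by linarith) hP2_1 x hx
        rw [hAT] at h; linarith [h]
      have hB1 : ∀ x ∈ Set.Icc T (T+1), q 3 x = max (d - (x - T)) 0 := by
        intro x hx
        have h := PH0 3 hc3 T (T+1) (by linarith) (by linarith) hP3_1 x hx
        rw [hBT] at h; exact h
      have hforce1 : ∀ ζ ∈ Set.Ioo T (T+1), f.fplus 0 ζ = 0 := by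
        intro ζ hζ
        refine (hF0 ζ (by linarith [hζ.1]) ?_).1
        rw [hA1 ζ ⟨hζ.1.le, hζ.2.le⟩, hB1 ζ ⟨hζ.1.le, hζ.2.le⟩]
        rcases le_total (d - (ζ - T)) 0 with h | h
        · rw [max_eq_right h]; linarith [hζ.1]
        · rw [max_eq_left h]; linarith [hζ.1]
      have hA_T1 : q 2 (T+1) = 2 + d := by
        have := hA1 (T+1) ⟨by linarith, le_rfl⟩; linarith
      have hB_T1 : q 3 (T+1) = 0 := by
        have h := hB1 (T+1) ⟨by linarith, le_rfl⟩
        rw [h]; exact max_eq_right (by linarith)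
      -- segment 2 : [T+1, T+2]
      have hP2_2 : ∀ ζ ∈ Set.Ioo (T+1) (T+2), f.fplus 2 ζ = 0 := by
        intro ζ hζ
        rw [(hTR ζ (by linarith [hζ.1])).1,
          hforce1 (ζ - 1) ⟨by linarith [hζ.1], by linarith [hζ.2]⟩]
      have hP3_2 : ∀ ζ ∈ Set.Ioo (T+1) (T+2), f.fplus 3 ζ = 2 := by
        intro ζ hζ
        rw [(hTR ζ (by linarith [hζ.1])).2,
          hforce1 (ζ - 1) ⟨by linarith [hζ.1], by linarith [hζ.2]⟩]
        norm_num
      have hA2 : ∀ x ∈ Set.Icc (T+1) (T+2), q 2 x = 2 + d - (x - (T+1)) := by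
        intro x hx
        have h := PH0 2 hc2 (T+1) (T+2) (by linarith) (by linarith) hP2_2 x hx
        rw [hA_T1] at h
        rw [h]; exact max_eq_left (by linarith [hx.2])
      have hB2 : ∀ x ∈ Set.Icc (T+1) (T+2), q 3 x = x - (T+1) := by
        intro x hx
        have h := PH2 3 hc3 (T+1) (T+2) (by linarith) (by linarith) hP3_2 x hx
        rw [hB_T1] at h; linarith [h]
      have hforce2a : ∀ ζ ∈ Set.Ioo (T+1) (T+(3+d)/2), f.fplus 0 ζ = 0 := by
        intro ζ hζ
        refine (hF0 ζ (by linarith [hζ.1]) ?_).1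
        rw [hA2 ζ ⟨hζ.1.le, by linarith [hζ.2]⟩, hB2 ζ ⟨hζ.1.le, by linarith [hζ.2]⟩]
        linarith [hζ.2]
      have hforce2b : ∀ ζ ∈ Set.Ioo (T+(3+d)/2) (T+2), f.fplus 0 ζ = 2 := by
        intro ζ hζ
        refine hF2 ζ (by linarith [hζ.1]) ?_
        rw [hA2 ζ ⟨by linarith [hζ.1], hζ.2.le⟩, hB2 ζ ⟨by linarith [hζ.1], hζ.2.le⟩]
        linarith [hζ.1]
      have hA_T2 : q 2 (T+2) = 1 + d := by
        have := hA2 (T+2) ⟨by linarith, le_rfl⟩; linarith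
      have hB_T2 : q 3 (T+2) = 1 := by
        have := hB2 (T+2) ⟨by linarith, le_rfl⟩; linarith
      -- segment 3 : [T+2, T+(3+d)/2+1]
      have hP2_3 : ∀ ζ ∈ Set.Ioo (T+2) (T+(3+d)/2+1), f.fplus 2 ζ = 0 := by
        intro ζ hζ
        rw [(hTR ζ (by linarith [hζ.1])).1,
          hforce2a (ζ - 1) ⟨by linarith [hζ.1], by linarith [hζ.2]⟩]
      have hP3_3 : ∀ ζ ∈ Set.Ioo (T+2) (T+(3+d)/2+1), f.fplus 3 ζ = 2 := by
        intro ζ hζ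
        rw [(hTR ζ (by linarith [hζ.1])).2,
          hforce2a (ζ - 1) ⟨by linarith [hζ.1], by linarith [hζ.2]⟩]
        norm_num
      have hA3 : ∀ x ∈ Set.Icc (T+2) (T+(3+d)/2+1), q 2 x = 1 + d - (x - (T+2)) := by
        intro x hx
        have h := PH0 2 hc2 (T+2) (T+(3+d)/2+1) (by linarith) (by linarith) hP2_3 x hx
        rw [hA_T2] at h
        rw [h]; exact max_eq_left (by linarith [hx.2])
      have hB3 : ∀ x ∈ Set.Icc (T+2) (T+(3+d)/2+1), q 3 x = 1 + (x - (T+2)) := by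
        intro x hx
        have h := PH2 3 hc3 (T+2) (T+(3+d)/2+1) (by linarith) (by linarith) hP3_3 x hx
        rw [hB_T2] at h; linarith [h]
      have hforce3 : ∀ ζ ∈ Set.Ioo (T+2) (T+(3+d)/2+1), f.fplus 0 ζ = 2 := by
        intro ζ hζ
        refine hF2 ζ (by linarith [hζ.1]) ?_
        rw [hA3 ζ ⟨hζ.1.le, hζ.2.le⟩, hB3 ζ ⟨hζ.1.le, hζ.2.le⟩]
        linarith [hζ.1]
      have hA_b3 : q 2 (T+(3+d)/2+1) = (1+d)/2 := by
        have := hA3 (T+(3+d)/2+1) ⟨by linarith, le_rfl⟩; linarith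
      have hB_b3 : q 3 (T+(3+d)/2+1) = (3+d)/2 := by
        have := hB3 (T+(3+d)/2+1) ⟨by linarith, le_rfl⟩; linarith
      -- segment 4 : [T+(3+d)/2+1, T+3]
      have hP2_4 : ∀ ζ ∈ Set.Ioo (T+(3+d)/2+1) (T+3), f.fplus 2 ζ = 2 := by
        intro ζ hζ
        rw [(hTR ζ (by linarith [hζ.1])).1,
          hforce2b (ζ - 1) ⟨by linarith [hζ.1], by linarith [hζ.2]⟩]
      have hP3_4 : ∀ ζ ∈ Set.Ioo (T+(3+d)/2+1) (T+3), f.fplus 3 ζ = 0 := by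
        intro ζ hζ
        rw [(hTR ζ (by linarith [hζ.1])).2,
          hforce2b (ζ - 1) ⟨by linarith [hζ.1], by linarith [hζ.2]⟩]
        norm_num
      have hA4 : ∀ x ∈ Set.Icc (T+(3+d)/2+1) (T+3),
          q 2 x = (1+d)/2 + (x - (T+(3+d)/2+1)) := by
        intro x hx
        have h := PH2 2 hc2 (T+(3+d)/2+1) (T+3) (by linarith) (by linarith) hP2_4 x hx
        rw [hA_b3] at h; linarith [h]
      have hB4 : ∀ x ∈ Set.Icc (T+(3+d)/2+1) (T+3),
          q 3 x = (3+d)/2 - (x - (T+(3+d)/2+1)) := by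
        intro x hx
        have h := PH0 3 hc3 (T+(3+d)/2+1) (T+3) (by linarith) (by linarith) hP3_4 x hx
        rw [hB_b3] at h
        rw [h]; exact max_eq_left (by linarith [hx.2])
      have hforce4 : ∀ ζ ∈ Set.Ioo (T+(3+d)/2+1) (T+3), f.fplus 0 ζ = 2 := by
        intro ζ hζ
        refine hF2 ζ (by linarith [hζ.1]) ?_
        rw [hA4 ζ ⟨hζ.1.le, hζ.2.le⟩, hB4 ζ ⟨hζ.1.le, hζ.2.le⟩]
        linarith [hζ.2]
      have hA_T3 : q 2 (T+3) = 1 := by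
        have := hA4 (T+3) ⟨by linarith, le_rfl⟩; linarith
      have hB_T3 : q 3 (T+3) = 1 + d := by
        have := hB4 (T+3) ⟨by linarith, le_rfl⟩; linarith
      -- segment 5 : [T+3, T+(3+d)/2+2]
      have hP2_5 : ∀ ζ ∈ Set.Ioo (T+3) (T+(3+d)/2+2), f.fplus 2 ζ = 2 := by
        intro ζ hζ
        rw [(hTR ζ (by linarith [hζ.1])).1,
          hforce3 (ζ - 1) ⟨by linarith [hζ.1], by linarith [hζ.2]⟩]
      have hP3_5 : ∀ ζ ∈ Set.Ioo (T+3) (T+(3+d)/2+2), f.fplus 3 ζ = 0 := by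
        intro ζ hζ
        rw [(hTR ζ (by linarith [hζ.1])).2,
          hforce3 (ζ - 1) ⟨by linarith [hζ.1], by linarith [hζ.2]⟩]
        norm_num
      have hA5 : ∀ x ∈ Set.Icc (T+3) (T+(3+d)/2+2), q 2 x = 1 + (x - (T+3)) := by
        intro x hx
        have h := PH2 2 hc2 (T+3) (T+(3+d)/2+2) (by linarith) (by linarith) hP2_5 x hx
        rw [hA_T3] at h; linarith [h]
      have hB5 : ∀ x ∈ Set.Icc (T+3) (T+(3+d)/2+2), q 3 x = 1 + d - (x - (T+3)) := by
        intro x hx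
        have h := PH0 3 hc3 (T+3) (T+(3+d)/2+2) (by linarith) (by linarith) hP3_5 x hx
        rw [hB_T3] at h
        rw [h]; exact max_eq_left (by linarith [hx.2])
      have hforce5 : ∀ ζ ∈ Set.Ioo (T+3) (T+(3+d)/2+2), f.fplus 0 ζ = 2 := by
        intro ζ hζ
        refine hF2 ζ (by linarith [hζ.1]) ?_
        rw [hA5 ζ ⟨hζ.1.le, hζ.2.le⟩, hB5 ζ ⟨hζ.1.le, hζ.2.le⟩]
        linarith [hζ.2]
      have hforce_pt : f.fplus 0 (T+3) = 2 := by
        refine hF2 (T+3) (by linarith) ?_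
        rw [hA_T3, hB_T3]; linarith
      refine ⟨?_, ?_, ?_, hA_T1, ?_⟩
      · have := hA5 (T+(3+d)/2+2) ⟨by linarith, le_rfl⟩; linarith
      · have := hB5 (T+(3+d)/2+2) ⟨by linarith, le_rfl⟩; linarith
      · intro ζ hζ
        rcases lt_trichotomy ζ (T+3) with h | h | h
        · exact hforce4 ζ ⟨by linarith [hζ.1], h⟩
        · rw [h]; exact hforce_pt
        · exact hforce5 ζ ⟨h, hζ.2⟩
      · intro x hx
        rcases le_total x (T+1) with h | h
        · rw [hA1 x ⟨hx.1, h⟩]; linarith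
        · rcases le_total x (T+2) with h2 | h2
          · rw [hA2 x ⟨h, h2⟩]; linarith
          · rcases le_total x (T+(3+d)/2+1) with h3 | h3
            · rw [hA3 x ⟨h2, h3⟩]; linarith
            · rcases le_total x (T+3) with h4 | h4
              · rw [hA4 x ⟨h3, h4⟩]; linarith
              · rw [hA5 x ⟨h4, hx.2⟩]; linarith [hx.2]
    -- bookkeeping for the induction
    have hdk : ∀ k : ℕ, 0 ≤ 1 - (1/2:ℝ)^k ∧ 1 - (1/2:ℝ)^k < 1 ∧
        2 ≤ 1 + 4*(k:ℝ) + (1/2:ℝ)^k := by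
      intro k
      have h1 : (1/2:ℝ)^k ≤ 1 := pow_le_one₀ (by norm_num) (by norm_num)
      have h2 : (0:ℝ) < (1/2:ℝ)^k := pow_pos (by norm_num) k
      refine ⟨by linarith, by linarith, ?_⟩
      rcases Nat.eq_zero_or_pos k with hk | hk
      · subst hk; norm_num
      · have : (1:ℝ) ≤ (k:ℝ) := by exact_mod_cast hk
        linarith
    have hTeq : ∀ k : ℕ, (1 + 4*(k:ℝ) + (1/2:ℝ)^k) + (3 + (1 - (1/2:ℝ)^k))/2 + 2 =
        1 + 4*((k:ℝ)+1) + (1/2:ℝ)^(k+1) := by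
      intro k; rw [pow_succ]; ring
    have hinv : ∀ k : ℕ, q 2 (1 + 4*(k:ℝ) + (1/2:ℝ)^k) = 2 - (1/2:ℝ)^k ∧
        q 3 (1 + 4*(k:ℝ) + (1/2:ℝ)^k) = 1 - (1/2:ℝ)^k ∧
        (∀ ζ ∈ Set.Ioo (1 + 4*(k:ℝ) + (1/2:ℝ)^k - 1) (1 + 4*(k:ℝ) + (1/2:ℝ)^k),
          f.fplus 0 ζ = 2) := by
      intro k
      induction k with
      | zero =>
        have h20 : (1 + 4*((0:ℕ):ℝ) + (1/2:ℝ)^(0:ℕ)) = 2 := by norm_num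
        refine ⟨?_, ?_, ?_⟩
        · rw [h20, show (2:ℝ) - (1/2:ℝ)^(0:ℕ) = 1 from by norm_num]
          have := hA12 2 ⟨by norm_num, le_rfl⟩; linarith
        · rw [h20, show (1:ℝ) - (1/2:ℝ)^(0:ℕ) = 0 from by norm_num]
          exact hB12 2 ⟨by norm_num, le_rfl⟩
        · rw [h20]
          intro ζ hζ
          exact hforce12 ζ ⟨by linarith [hζ.1], hζ.2⟩
      | succ k ih =>
        obtain ⟨ihA, ihB, ihg⟩ := ih
        obtain ⟨hd0, hd1, hT2⟩ := hdk k
        have hAk : q 2 (1 + 4*(k:ℝ) + (1/2:ℝ)^k) = 1 + (1 - (1/2:ℝ)^k) := by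
          rw [ihA]; ring
        obtain ⟨hA', hB', hg', -, -⟩ :=
          hcycle (1 - (1/2:ℝ)^k) (1 + 4*(k:ℝ) + (1/2:ℝ)^k) hd0 hd1 hT2 hAk ihB ihg
        rw [hTeq k] at hA' hB' hg'
        push_cast
        refine ⟨?_, ?_, ?_⟩
        · rw [hA', pow_succ]; ring
        · rw [hB', pow_succ]; ring
        · exact hg'
    have hpeak : ∀ k : ℕ, q 2 ((1 + 4*(k:ℝ) + (1/2:ℝ)^k) + 1) = 3 - (1/2:ℝ)^k := by
      intro k
      obtain ⟨ihA, ihB, ihg⟩ := hinv k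
      obtain ⟨hd0, hd1, hT2⟩ := hdk k
      have hAk : q 2 (1 + 4*(k:ℝ) + (1/2:ℝ)^k) = 1 + (1 - (1/2:ℝ)^k) := by
        rw [ihA]; ring
      obtain ⟨-, -, -, hpk, -⟩ :=
        hcycle (1 - (1/2:ℝ)^k) (1 + 4*(k:ℝ) + (1/2:ℝ)^k) hd0 hd1 hT2 hAk ihB ihg
      rw [hpk]; ring
    have hbnd : ∀ k : ℕ, ∀ x ∈ Set.Icc (1 + 4*(k:ℝ) + (1/2:ℝ)^k)
        (1 + 4*((k:ℝ)+1) + (1/2:ℝ)^(k+1)), q 2 x ≤ 3 - (1/2:ℝ)^k := by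
      intro k x hx
      obtain ⟨ihA, ihB, ihg⟩ := hinv k
      obtain ⟨hd0, hd1, hT2⟩ := hdk k
      have hAk : q 2 (1 + 4*(k:ℝ) + (1/2:ℝ)^k) = 1 + (1 - (1/2:ℝ)^k) := by
        rw [ihA]; ring
      obtain ⟨-, -, -, -, hbd⟩ :=
        hcycle (1 - (1/2:ℝ)^k) (1 + 4*(k:ℝ) + (1/2:ℝ)^k) hd0 hd1 hT2 hAk ihB ihg
      have hx' : x ∈ Set.Icc (1 + 4*(k:ℝ) + (1/2:ℝ)^k)
          ((1 + 4*(k:ℝ) + (1/2:ℝ)^k) + (3 + (1 - (1/2:ℝ)^k))/2 + 2) := by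
        rw [hTeq k]; exact hx
      have := hbd x hx'
      linarith
    have hglob : ∀ x : ℝ, 0 ≤ x → q 2 x < 3 := by
      have hcov : ∀ k : ℕ, ∀ x ∈ Set.Icc (0:ℝ) (1 + 4*(k:ℝ) + (1/2:ℝ)^k), q 2 x < 3 := by
        intro k
        induction k with
        | zero =>
          intro x hx
          norm_num at hx
          rcases le_total x 1 with h | h
          · rw [hA01 x ⟨hx.1, h⟩]; norm_num
          · rw [hA12 x ⟨h, hx.2⟩]; linarith [hx.2]
        | succ k ih =>
          intro x hx
          rcases le_total x (1 + 4*(k:ℝ) + (1/2:ℝ)^k) with h | h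
          · exact ih x ⟨hx.1, h⟩
          · have hx2 : x ≤ 1 + 4*((k:ℝ)+1) + (1/2:ℝ)^(k+1) := by
              have := hx.2; push_cast at this; linarith
            have := hbnd k x ⟨h, hx2⟩
            have hp : (0:ℝ) < (1/2:ℝ)^k := pow_pos (by norm_num) k
            linarith
      intro x hx
      have hk : x ≤ 1 + 4*((⌈x⌉₊:ℕ):ℝ) + (1/2:ℝ)^(⌈x⌉₊) := by
        have h1 : x ≤ ((⌈x⌉₊:ℕ):ℝ) := Nat.le_ceil x
        have h2 : (0:ℝ) < (1/2:ℝ)^(⌈x⌉₊) := pow_pos (by norm_num) _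
        have h3 : (0:ℝ) ≤ ((⌈x⌉₊:ℕ):ℝ) := Nat.cast_nonneg _
        linarith
      exact hcov ⌈x⌉₊ x ⟨hx, hk⟩
    -- the two negations
    constructor
    · rintro ⟨θt, hθt, p, hp, hper⟩
      obtain ⟨θm, hθmK, hmax⟩ := isCompact_Icc.exists_isMaxOn
        (⟨θt, le_rfl, by linarith⟩ : (Set.Icc θt (θt + p)).Nonempty)
        ((hqcont 2).continuousOn)
      have hub : ∀ θ : ℝ, θt ≤ θ → q 2 θ ≤ q 2 θm := by
        intro θ hθ
        set k := ⌊(θ - θt)/p⌋₊ with hkdef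
        have h1 : (k:ℝ) ≤ (θ - θt)/p := Nat.floor_le (div_nonneg (by linarith) hp.le)
        have h2 : (θ - θt)/p < (k:ℝ) + 1 := Nat.lt_floor_add_one _
        have h1' : (k:ℝ)*p ≤ θ - θt := by
          rw [← div_mul_cancel₀ (θ - θt) (ne_of_gt hp)]
          exact mul_le_mul_of_nonneg_right h1 hp.le
        have h2' : θ - θt < ((k:ℝ)+1)*p := by
          rw [← div_mul_cancel₀ (θ - θt) (ne_of_gt hp)]
          exact mul_lt_mul_of_pos_right h2 hp
        have hθ' : θt ≤ θ - (k:ℝ)*p := by linarith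
        have hθ'' : θ - (k:ℝ)*p ≤ θt + p := by nlinarith
        have hper2 := hper 2 (θ - (k:ℝ)*p) hθ' k
        rw [show θ - (k:ℝ)*p + (k:ℝ)*p = θ by ring] at hper2
        rw [hper2]
        exact hmax ⟨hθ', hθ''⟩
      have hm3 : q 2 θm < 3 := hglob θm (le_trans hθt hθmK.1)
      obtain ⟨k1, hk1⟩ := exists_pow_lt_of_lt_one
        (by linarith : (0:ℝ) < 3 - q 2 θm) (by norm_num : (1/2:ℝ) < 1)
      set k := max k1 ⌈θt⌉₊ with hkdef
      have hpkle : (1/2:ℝ)^k ≤ (1/2:ℝ)^k1 :=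
        pow_le_pow_of_le_one (by norm_num) (by norm_num) (le_max_left _ _)
      have hθk : θt ≤ (1 + 4*(k:ℝ) + (1/2:ℝ)^k) + 1 := by
        have h1 : θt ≤ ((⌈θt⌉₊:ℕ):ℝ) := Nat.le_ceil θt
        have h2 : ((⌈θt⌉₊:ℕ):ℝ) ≤ (k:ℝ) := by
          exact_mod_cast le_max_right k1 ⌈θt⌉₊
        have h3 : (0:ℝ) < (1/2:ℝ)^k := pow_pos (by norm_num) k
        linarith
      have := hub _ hθk
      rw [hpeak k] at this
      linarith
    · rintro ⟨θt, hθt, hconst⟩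
      set k := ⌈θt⌉₊ with hkdef
      have hθk1 : θt ≤ (1 + 4*(k:ℝ) + (1/2:ℝ)^k) + 1 := by
        have h1 : θt ≤ ((⌈θt⌉₊:ℕ):ℝ) := Nat.le_ceil θt
        have h3 : (0:ℝ) < (1/2:ℝ)^k := pow_pos (by norm_num) k
        rw [hkdef]
        linarith
      have hθk2 : θt ≤ (1 + 4*(((k+1):ℕ):ℝ) + (1/2:ℝ)^(k+1)) + 1 := by
        have h1 : θt ≤ ((⌈θt⌉₊:ℕ):ℝ) := Nat.le_ceil θt
        have h3 : (0:ℝ) < (1/2:ℝ)^(k+1) := pow_pos (by norm_num) _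
        push_cast
        rw [hkdef]
        linarith
      have e1 := hconst 2 _ hθk1
      have e2 := hconst 2 _ hθk2
      rw [hpeak k] at e1
      rw [hpeak (k+1)] at e2
      have hlt : (1/2:ℝ)^(k+1) < (1/2:ℝ)^k := by
        rw [pow_succ]
        have h3 : (0:ℝ) < (1/2:ℝ)^k := pow_pos (by norm_num) k
        linarith
      linarith
end

section
/- Let p ≥ 1 be an integer, let b ∈ ℚ with b ≥ 0, and for each i ∈ {1,…,p} let α_i ∈ ℚ with α_i > 0, β_i ∈ ℚ, and γ_i ∈ ℚ with γ_i ≥ 0 and define k_i : ℝ≥0 → ℝ by k_i(z) = β_i for z ≤ γ_i and k_i(z) = β_i + (z − γ_i)/α_i for z ≥ γ_i. Then there exist rational numbers z_1, …, z_p ≥ 0 with Σ_{i=1}^p z_i = b and a rational number λ such that for every i: if z_i > 0 then k_i(z_i) = λ, and if z_i = 0 then k_i(0) ≥ λ. (In other words, the water-filling distribution problem arising in the IDE extension step admits a rational solution whenever its input data are rational.) -/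
section Aux
variable {p : ℕ} (α β γ : Fin p → ℚ)

private def wf (S : Finset (Fin p)) (l : ℚ) : ℚ := ∑ i ∈ S, (γ i + α i * (l - β i))

private lemma wf_eq (S : Finset (Fin p)) (l : ℚ) :
    wf α β γ S l = (∑ i ∈ S, (γ i - α i * β i)) + l * ∑ i ∈ S, α i := by
  rw [wf, Finset.sum_congr rfl (fun i (_ : i ∈ S) =>
    show γ i + α i * (l - β i) = (γ i - α i * β i) + l * α i by ring),
    Finset.sum_add_distrib, Finset.mul_sum]

private lemma wf_mono (hα : ∀ i, 0 < α i) (S : Finset (Fin p)) {x y : ℚ} (hxy : x ≤ y) :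
    wf α β γ S x ≤ wf α β γ S y := by
  rw [wf_eq, wf_eq]
  have hA : (0:ℚ) ≤ ∑ i ∈ S, α i := Finset.sum_nonneg fun i _ => (hα i).le
  nlinarith [mul_le_mul_of_nonneg_right hxy hA]

private lemma wf_level (hp : 1 ≤ p) (b : ℚ) (hb : 0 ≤ b)
    (hα : ∀ i, 0 < α i) (hγ : ∀ i, 0 ≤ γ i) :
    ∃ lam : ℚ,
      wf α β γ (Finset.univ.filter fun i => β i < lam) lam ≤ b ∧
      b ≤ wf α β γ (Finset.univ.filter fun i => β i < lam) lam +
        ∑ i ∈ Finset.univ.filter (fun i => β i = lam), γ i := by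
  classical
  haveI : NeZero p := ⟨Nat.pos_iff_ne_zero.mp hp⟩
  have huniv : (Finset.univ : Finset (Fin p)).Nonempty := Finset.univ_nonempty
  set μ : Finset (Fin p) → ℚ :=
    fun S => (b - ∑ i ∈ S, (γ i - α i * β i)) / ∑ i ∈ S, α i with hμdef
  have hμval : ∀ S : Finset (Fin p), S.Nonempty → wf α β γ S (μ S) = b := by
    intro S hS
    have hA : (0:ℚ) < ∑ i ∈ S, α i := Finset.sum_pos (fun i _ => hα i) hS
    rw [wf_eq, hμdef]
    field_simp
    ring
  set G : ℚ → ℚ := fun l => wf α β γ (Finset.univ.filter fun i => β i ≤ l) l with hGdef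
  have hwfG : ∀ (S : Finset (Fin p)) (l : ℚ), (∀ i ∈ S, β i ≤ l) → wf α β γ S l ≤ G l := by
    intro S l hS
    apply Finset.sum_le_sum_of_subset_of_nonneg
    · intro i hi
      exact Finset.mem_filter.mpr ⟨Finset.mem_univ i, hS i hi⟩
    · intro i hi _
      have : β i ≤ l := (Finset.mem_filter.mp hi).2
      have := hα i
      have := hγ i
      nlinarith
  set C : Finset ℚ := (Finset.univ.image β) ∪ (Finset.univ.image μ) ∪
    (Finset.univ.image fun j : Fin p => max (μ Finset.univ) (β j)) with hCdef
  set D : Finset ℚ := C.filter fun l => b ≤ G l with hDdef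
  have hD : D.Nonempty := by
    obtain ⟨m, _, hm⟩ := Finset.exists_max_image Finset.univ β huniv
    refine ⟨max (μ Finset.univ) (β m), Finset.mem_filter.mpr ⟨?_, ?_⟩⟩
    · exact Finset.mem_union_right _ (Finset.mem_image_of_mem _ (Finset.mem_univ m))
    · calc b = wf α β γ Finset.univ (μ Finset.univ) := (hμval _ huniv).symm
        _ ≤ wf α β γ Finset.univ (max (μ Finset.univ) (β m)) :=
            wf_mono α β γ hα _ (le_max_left _ _)
        _ ≤ G (max (μ Finset.univ) (β m)) := hwfG _ _ fun i _ =>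
            le_trans (hm i (Finset.mem_univ i)) (le_max_right _ _)
  set lam : ℚ := D.min' hD with hlamdef
  have hlamD : lam ∈ D := D.min'_mem hD
  have hGlam : b ≤ G lam := (Finset.mem_filter.mp hlamD).2
  set T : Finset (Fin p) := Finset.univ.filter fun i => β i < lam with hTdef
  have hlow : wf α β γ T lam ≤ b := by
    by_contra hlt
    push_neg at hlt
    have hT : T.Nonempty := by
      rcases T.eq_empty_or_nonempty with h | h
      · rw [h] at hlt
        simp [wf] at hlt
        exact absurd (lt_of_le_of_lt hb hlt) (lt_irrefl _)
      · exact h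
    obtain ⟨m', hm'T, hm'⟩ := Finset.exists_max_image T β hT
    have hμT : μ T < lam := by
      by_contra h
      push_neg at h
      have := wf_mono α β γ hα T h
      rw [hμval T hT] at this
      exact absurd (lt_of_le_of_lt this hlt) (lt_irrefl _)
    have hβm' : β m' < lam := (Finset.mem_filter.mp hm'T).2
    set l' : ℚ := max (μ T) (β m') with hl'def
    have hl'lt : l' < lam := max_lt hμT hβm'
    have hl'D : l' ∈ D := by
      refine Finset.mem_filter.mpr ⟨?_, ?_⟩
      · rcases max_choice (μ T) (β m') with h | h <;> rw [hl'def, h]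
        · exact Finset.mem_union_left _
            (Finset.mem_union_right _ (Finset.mem_image_of_mem _ (Finset.mem_univ T)))
        · exact Finset.mem_union_left _
            (Finset.mem_union_left _ (Finset.mem_image_of_mem _ (Finset.mem_univ m')))
      · calc b = wf α β γ T (μ T) := (hμval T hT).symm
          _ ≤ wf α β γ T l' := wf_mono α β γ hα T (le_max_left _ _)
          _ ≤ G l' := hwfG T l' fun i hi =>
              le_trans (hm' i hi) (le_max_right _ _)
    exact absurd (D.min'_le l' hl'D) (not_le.mpr hl'lt)
  refine ⟨lam, hlow, ?_⟩
  have hsplit : G lam = wf α β γ T lam + ∑ i ∈ Finset.univ.filter (fun i => β i = lam), γ i := by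
    have hset : (Finset.univ.filter fun i : Fin p => β i ≤ lam) =
        T ∪ Finset.univ.filter (fun i => β i = lam) := by
      ext i
      simp [hTdef, le_iff_lt_or_eq]
    have hdisj : Disjoint T (Finset.univ.filter fun i : Fin p => β i = lam) := by
      rw [Finset.disjoint_left]
      intro i hi hi'
      have h1 := (Finset.mem_filter.mp hi).2
      have h2 := (Finset.mem_filter.mp hi').2
      rw [h2] at h1
      exact absurd h1 (lt_irrefl _)
    rw [hGdef]
    show wf α β γ _ lam = _
    rw [hset, wf, Finset.sum_union hdisj]
    congr 1
    refine Finset.sum_congr rfl fun i hi => ?_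
    have h2 := (Finset.mem_filter.mp hi).2
    rw [h2]
    ring
  rw [← hsplit]
  exact hGlam



/-- The water-filling distribution problem with rational data admits a
rational solution: given `b ≥ 0` and, for `i ∈ {1,…,p}`, rational `α_i > 0`, `β_i` and
`γ_i ≥ 0` defining `k_i(z) = β_i` for `z ≤ γ_i` and `k_i(z) = β_i + (z−γ_i)/α_i` for
`z ≥ γ_i`, there are rational `z_1,…,z_p ≥ 0` summing to `b` and a rational `λ` such that
`k_i(z_i) = λ` whenever `z_i > 0` and `k_i(0) ≥ λ` whenever `z_i = 0`. -/
theorem waterfilling_rational_solution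
    (p : ℕ) (hp : 1 ≤ p) (b : ℚ) (hb : 0 ≤ b)
    (α β γ : Fin p → ℚ) (hα : ∀ i, 0 < α i) (hγ : ∀ i, 0 ≤ γ i) :
    ∃ (z : Fin p → ℚ) (lam : ℚ),
      (∀ i, 0 ≤ z i) ∧ (∑ i, z i = b) ∧
      ∀ i,
        (0 < z i →
          (if z i ≤ γ i then β i else β i + (z i - γ i) / α i) = lam) ∧
        (z i = 0 →
          lam ≤ (if (0:ℚ) ≤ γ i then β i else β i + (0 - γ i) / α i)) := by
  classical
  obtain ⟨lam, hlow, hupp⟩ := wf_level α β γ hp b hb hα hγ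
  set T : Finset (Fin p) := Finset.univ.filter fun i => β i < lam with hTdef
  set Q : Finset (Fin p) := Finset.univ.filter fun i => β i = lam with hQdef
  set Γ : ℚ := ∑ i ∈ Q, γ i with hΓdef
  set r : ℚ := b - wf α β γ T lam with hrdef
  have hr0 : 0 ≤ r := by rw [hrdef]; linarith
  have hrΓ : r ≤ Γ := by rw [hrdef, hΓdef]; linarith
  have hΓ0 : 0 ≤ Γ := Finset.sum_nonneg fun i _ => hγ i
  set z : Fin p → ℚ := fun i =>
    if β i < lam then γ i + α i * (lam - β i)
    else if β i = lam then r * γ i / Γ else 0 with hzdef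
  refine ⟨z, lam, ?_, ?_, ?_⟩
  · intro i
    simp only [hzdef]
    by_cases h1 : β i < lam
    · rw [if_pos h1]
      have := hα i; have := hγ i
      nlinarith
    · rw [if_neg h1]
      by_cases h2 : β i = lam
      · rw [if_pos h2]
        exact div_nonneg (mul_nonneg hr0 (hγ i)) hΓ0
      · rw [if_neg h2]
  · -- sum
    have hsum : ∑ i, z i = wf α β γ T lam + ∑ i ∈ Q, (r * γ i / Γ) := by
      have h1 : ∑ i, z i =
          ∑ i, ((if β i < lam then γ i + α i * (lam - β i) else 0) +
                (if β i = lam then r * γ i / Γ else 0)) := by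
        refine Finset.sum_congr rfl fun i _ => ?_
        simp only [hzdef]
        by_cases h1 : β i < lam
        · have h2 : ¬ β i = lam := fun h => absurd (h ▸ h1) (lt_irrefl _)
          rw [if_pos h1, if_pos h1, if_neg h2, add_zero]
        · rw [if_neg h1, if_neg h1, zero_add]
      rw [h1, Finset.sum_add_distrib, ← Finset.sum_filter, ← Finset.sum_filter]
      rfl
    rw [hsum]
    by_cases hΓ : Γ = 0
    · have : r = 0 := le_antisymm (hΓ ▸ hrΓ) hr0
      have hz : ∑ i ∈ Q, (r * γ i / Γ) = 0 := by
        refine Finset.sum_eq_zero fun i _ => ?_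
        rw [this]; ring
      rw [hz]
      rw [hrdef] at this
      linarith
    · have : ∑ i ∈ Q, (r * γ i / Γ) = r := by
        rw [Finset.sum_congr rfl (fun i (_ : i ∈ Q) =>
          show r * γ i / Γ = (r / Γ) * γ i by ring), ← Finset.mul_sum, ← hΓdef,
          div_mul_eq_mul_div, mul_div_assoc, div_self hΓ, mul_one]
      rw [this, hrdef]
      ring
  · intro i
    by_cases h1 : β i < lam
    · have hz : z i = γ i + α i * (lam - β i) := by simp only [hzdef]; exact if_pos h1
      constructor
      · intro _
        have hnle : ¬ z i ≤ γ i := by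
          rw [hz]
          have := hα i
          nlinarith
        rw [if_neg hnle, hz]
        have hαi := (hα i).ne'
        have h3 : γ i + α i * (lam - β i) - γ i = α i * (lam - β i) := by ring
        rw [h3, mul_div_cancel_left₀ _ hαi]
        ring
      · intro h0
        exfalso
        rw [hz] at h0
        have := hα i; have := hγ i
        nlinarith
    · by_cases h2 : β i = lam
      · have hz : z i = r * γ i / Γ := by simp only [hzdef]; rw [if_neg h1]; exact if_pos h2
        have hle : z i ≤ γ i := by
          rcases eq_or_lt_of_le hΓ0 with hΓ | hΓ
          · have : r = 0 := le_antisymm (hΓ ▸ hrΓ) hr0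
            rw [hz, this, zero_mul, zero_div]
            exact hγ i
          · rw [hz, div_le_iff₀ hΓ]
            have := hγ i
            nlinarith [mul_le_mul_of_nonneg_right hrΓ (hγ i)]
        constructor
        · intro _
          rw [if_pos hle]
          exact h2
        · intro _
          rw [if_pos (hγ i)]
          exact le_of_eq h2.symm
      · have hz : z i = 0 := by simp only [hzdef]; rw [if_neg h1, if_neg h2]
        constructor
        · intro h0
          rw [hz] at h0
          exact absurd h0 (lt_irrefl _)
        · intro _
          rw [if_pos (hγ i)]
          exact le_of_not_gt h1
end Aux
end
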